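/- arXiv:1810.12037 — 3 statements merged into one kernel-verified Lean document; each statement's English description precedes it below -/
import Mathlib

section
/- Let L be a finite-dimensional complex Lie algebra with a nondegenerate symmetric ℂ-bilinear form B, let g be a real slice of (L,B), and let g̃ be a compact real form of (L,B). Then for every x ∈ g ∩ g̃ there exists a Cartan involution of Lie algebras θ : g → g of the restriction of B to g such that θ(x) = x. -/
/-!
Setup: a finite-dimensional complex Lie algebra `L` with a nondegenerate symmetric
`ℂ`-bilinear form `B` (a "holomorphic inner product"), viewed also as a real Lie algebra.
-/

variable {L : Type*} [LieRing L] [LieAlgebra ℂ L]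

/-- A complex Lie algebra is in particular a real Lie algebra. -/
noncomputable instance instLieAlgebraRealOfComplex : LieAlgebra ℝ L :=
  { (inferInstance : Module ℝ L) with
    lie_smul := fun t x y => by
      rw [show t • y = (t : ℂ) • y from rfl, lie_smul,
        show (t : ℂ) • ⁅x, y⁆ = t • ⁅x, y⁆ from rfl] }

/-- `g` is a real form of the complex Lie algebra `L`:
`g ∩ i • g = {0}` and `g + i • g = L`. -/
def IsRealForm (g : LieSubalgebra ℝ L) : Prop :=
  (∀ x ∈ g, ∀ y ∈ g, x = Complex.I • y → x = 0) ∧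
  (∀ z : L, ∃ x ∈ g, ∃ y ∈ g, z = x + Complex.I • y)

/-- `g` is a real slice of `(L, B)`: a real form of `L` on which `B` is real-valued. -/
def IsRealSlice (B : LinearMap.BilinForm ℂ L) (g : LieSubalgebra ℝ L) : Prop :=
  IsRealForm g ∧ ∀ x ∈ g, ∀ y ∈ g, (B x y).im = 0

/-- A compact real form of `(L, B)`: a real slice on which `B` is positive definite. -/
def IsCompactRealForm (B : LinearMap.BilinForm ℂ L) (u : LieSubalgebra ℝ L) : Prop :=
  IsRealSlice B u ∧ ∀ x ∈ u, x ≠ 0 → 0 < (B x x).re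

/-- A Cartan involution of the metric `B|g`: an `ℝ`-linear involution `θ` of `g` such that
`(x, y) ↦ B x (θ y)` is a positive-definite (real-valued, symmetric) inner product on `g`. -/
def IsCartanInvolutionOfMetric (B : LinearMap.BilinForm ℂ L) (g : LieSubalgebra ℝ L)
    (θ : ↥g →ₗ[ℝ] ↥g) : Prop :=
  (∀ x, θ (θ x) = x) ∧
  (∀ x y : ↥g, B (θ x : L) (y : L) = B (x : L) (θ y : L)) ∧
  (∀ x : ↥g, x ≠ 0 → 0 < (B (x : L) (θ x : L)).re)

/-- A Cartan involution of Lie algebras of the metric `B|g`: a Cartan involution of the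
metric which is moreover a Lie algebra automorphism of `g`. -/
def IsCartanInvolutionOfLieAlgebras (B : LinearMap.BilinForm ℂ L) (g : LieSubalgebra ℝ L)
    (θ : ↥g →ₗ[ℝ] ↥g) : Prop :=
  IsCartanInvolutionOfMetric B g θ ∧ ∀ x y : ↥g, θ ⁅x, y⁆ = ⁅θ x, θ y⁆

private lemma aux_unique {g : LieSubalgebra ℝ L} (hg : IsRealForm g)
    {x y : L} (hx : x ∈ g) (hy : y ∈ g) (h : x + Complex.I • y = 0) :
    x = 0 ∧ y = 0 := by
  have hxy : x = Complex.I • (-y) := by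
    rw [smul_neg, eq_neg_iff_add_eq_zero]; exact h
  have hx0 : x = 0 := hg.1 x hx (-y) (neg_mem hy) hxy
  refine ⟨hx0, ?_⟩
  rw [hx0, zero_add] at h
  have hy0 : y = (-Complex.I) • (Complex.I • y) := by
    rw [smul_smul]; norm_num
  rw [hy0, h, smul_zero]

private lemma aux_exists_conj (g : LieSubalgebra ℝ L) (hg : IsRealForm g) :
    ∃ σ : L →ₗ[ℝ] L,
      (∀ x ∈ g, σ x = x) ∧
      (∀ z, σ z = z → z ∈ g) ∧
      (∀ z, σ (σ z) = z) ∧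
      (∀ z w, σ ⁅z, w⁆ = ⁅σ z, σ w⁆) ∧
      (∀ x ∈ g, ∀ y ∈ g, σ (x + Complex.I • y) = x - Complex.I • y) := by
  have uniq : ∀ x ∈ g, ∀ y ∈ g, ∀ x' ∈ g, ∀ y' ∈ g,
      x + Complex.I • y = x' + Complex.I • y' → x = x' ∧ y = y' := by
    intro x hx y hy x' hx' y' hy' h
    have h0 : (x - x') + Complex.I • (y - y') = 0 := by
      rw [smul_sub, sub_add_sub_comm, h, sub_self]
    have := aux_unique hg (sub_mem hx hx') (sub_mem hy hy') h0
    exact ⟨sub_eq_zero.mp this.1, sub_eq_zero.mp this.2⟩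
  choose p hp q hq hpq using hg.2
  have hadd : ∀ z w : L, p (z + w) = p z + p w ∧ q (z + w) = q z + q w := by
    intro z w
    refine uniq _ (hp _) _ (hq _) _ (add_mem (hp z) (hp w)) _ (add_mem (hq z) (hq w)) ?_
    rw [← hpq (z + w), smul_add]
    calc z + w = (p z + Complex.I • q z) + (p w + Complex.I • q w) := by
          rw [← hpq z, ← hpq w]
      _ = _ := by abel
  have hsmul : ∀ (t : ℝ) (z : L), p (t • z) = t • p z ∧ q (t • z) = t • q z := by
    intro t z
    refine uniq _ (hp _) _ (hq _) _ (g.smul_mem t (hp z)) _ (g.smul_mem t (hq z)) ?_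
    rw [← hpq (t • z)]
    conv_lhs => rw [hpq z]
    rw [smul_add, smul_comm t Complex.I (q z)]
  let σfun : L → L := fun z => p z - Complex.I • q z
  have hσadd : ∀ z w, σfun (z + w) = σfun z + σfun w := by
    intro z w
    simp only [σfun, (hadd z w).1, (hadd z w).2, smul_add]; abel
  have hσsmul : ∀ (t : ℝ) (z : L), σfun (t • z) = t • σfun z := by
    intro t z
    simp only [σfun, (hsmul t z).1, (hsmul t z).2, smul_sub]
    rw [smul_comm t Complex.I (q z)]
  let σ : L →ₗ[ℝ] L := { toFun := σfun, map_add' := hσadd, map_smul' := hσsmul }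
  have hσeval : ∀ x ∈ g, ∀ y ∈ g, σ (x + Complex.I • y) = x - Complex.I • y := by
    intro x hx y hy
    have h := uniq _ (hp _) _ (hq _) x hx y hy (hpq (x + Complex.I • y)).symm
    show σfun _ = _
    simp only [σfun, h.1, h.2]
  have hσfix : ∀ x ∈ g, σ x = x := by
    intro x hx
    have := hσeval x hx 0 (zero_mem g)
    simpa using this
  have hσmem : ∀ z, σ z = z → z ∈ g := by
    intro z hz
    have hz' : σfun z = z := hz
    have h1 : p z - Complex.I • q z = p z + Complex.I • q z :=
      calc p z - Complex.I • q z = σfun z := rfl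
        _ = z := hz'
        _ = p z + Complex.I • q z := hpq z
    have h2 : Complex.I • q z + Complex.I • q z = 0 := by
      have h3 : p z + 0 = p z + (Complex.I • q z + Complex.I • q z) := by
        rw [add_zero]
        calc p z = p z - Complex.I • q z + Complex.I • q z := by abel
          _ = p z + Complex.I • q z + Complex.I • q z := by rw [h1]
          _ = _ := by abel
      exact ((add_right_inj (p z)).mp h3).symm
    have h4 : Complex.I • q z = 0 := by
      have h5 : (2:ℂ) • (Complex.I • q z) = 0 := by rw [two_smul]; exact h2
      calc Complex.I • q z = (2:ℂ)⁻¹ • ((2:ℂ) • (Complex.I • q z)) := by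
            rw [smul_smul, inv_mul_cancel₀ two_ne_zero, one_smul]
        _ = 0 := by rw [h5, smul_zero]
    have hz0 : z = p z := by
      conv_lhs => rw [hpq z]
      rw [h4, add_zero]
    have hp' := hp z
    rwa [← hz0] at hp'
  have hσlie : ∀ z w, σ ⁅z, w⁆ = ⁅σ z, σ w⁆ := by
    intro z w
    have hX : (⁅p z, p w⁆ - ⁅q z, q w⁆ : L) ∈ g :=
      sub_mem (g.lie_mem (hp z) (hp w)) (g.lie_mem (hq z) (hq w))
    have hY : (⁅p z, q w⁆ + ⁅q z, p w⁆ : L) ∈ g :=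
      add_mem (g.lie_mem (hp z) (hq w)) (g.lie_mem (hq z) (hp w))
    have hbrak : ⁅z, w⁆ = (⁅p z, p w⁆ - ⁅q z, q w⁆)
        + Complex.I • (⁅p z, q w⁆ + ⁅q z, p w⁆) := by
      conv_lhs => rw [hpq z, hpq w]
      simp only [lie_add, add_lie, lie_smul, smul_lie, smul_smul, Complex.I_mul_I,
        smul_add, smul_sub, neg_smul, one_smul]
      abel
    have hσz : σ z = p z - Complex.I • q z := rfl
    have hσw : σ w = p w - Complex.I • q w := rfl
    rw [hbrak, hσeval _ hX _ hY, hσz, hσw]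
    simp only [lie_sub, sub_lie, lie_smul, smul_lie, smul_smul, Complex.I_mul_I,
      smul_add, smul_sub, neg_smul, one_smul]
    abel
  exact ⟨σ, hσfix, hσmem, fun z => by
    have h := hσeval (p z) (hp z) (-(q z)) (neg_mem (hq z))
    have h1 : σ z = p z + Complex.I • (-(q z)) := by
      show σfun z = _; simp only [σfun, smul_neg]; abel
    rw [h1, h, smul_neg, sub_neg_eq_add, ← hpq z], hσlie, hσeval⟩

private lemma aux_conjB (B : LinearMap.BilinForm ℂ L) {g : LieSubalgebra ℝ L}
    (hg : IsRealSlice B g) (σ : L →ₗ[ℝ] L)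
    (hσ : ∀ x ∈ g, ∀ y ∈ g, σ (x + Complex.I • y) = x - Complex.I • y) :
    ∀ z w, B (σ z) (σ w) = starRingEnd ℂ (B z w) := by
  intro z w
  obtain ⟨x, hx, y, hy, hz⟩ := hg.1.2 z
  obtain ⟨u, hu, v, hv, hw⟩ := hg.1.2 w
  rw [hz, hw, hσ x hx y hy, hσ u hu v hv]
  have exp1 : ∀ (s t : ℂ), B (x + s • y) (u + t • v)
      = B x u + t * B x v + s * B y u + (s * t) * B y v := by
    intro s t
    simp only [map_add, map_smul, LinearMap.add_apply, LinearMap.smul_apply, smul_eq_mul]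
    ring
  have h1 : B (x - Complex.I • y) (u - Complex.I • v)
      = B x u + (-Complex.I) * B x v + (-Complex.I) * B y u
        + ((-Complex.I) * (-Complex.I)) * B y v := by
    rw [sub_eq_add_neg, sub_eq_add_neg, ← neg_smul, ← neg_smul]; exact exp1 _ _
  rw [h1, exp1]
  have him1 := hg.2 x hx u hu
  have him2 := hg.2 x hx v hv
  have him3 := hg.2 y hy u hu
  have him4 := hg.2 y hy v hv
  apply Complex.ext <;>
    simp [Complex.add_re, Complex.add_im, Complex.mul_re, Complex.mul_im,
      him1, him2, him3, him4] <;> ring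

private lemma aux_pos (B : LinearMap.BilinForm ℂ L) (hBsymm : ∀ x y : L, B x y = B y x)
    {g' : LieSubalgebra ℝ L} (hg' : IsCompactRealForm B g') (τ : L →ₗ[ℝ] L)
    (hτ : ∀ x ∈ g', ∀ y ∈ g', τ (x + Complex.I • y) = x - Complex.I • y) :
    ∀ z, z ≠ 0 → 0 < (B z (τ z)).re := by
  intro z hz
  obtain ⟨x, hx, y, hy, hzd⟩ := hg'.1.1.2 z
  rw [hzd, hτ x hx y hy]
  have h1 : B (x + Complex.I • y) (x - Complex.I • y)
      = B x x - Complex.I * B x y + Complex.I * B y x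
        - (Complex.I * Complex.I) * B y y := by
    simp only [map_add, map_sub, map_smul, LinearMap.add_apply, LinearMap.sub_apply,
      LinearMap.smul_apply, smul_eq_mul]
    ring
  have h2 : B (x + Complex.I • y) (x - Complex.I • y) = B x x + B y y := by
    rw [h1, hBsymm y x, Complex.I_mul_I]; ring
  rw [h2]
  have hxy : x ≠ 0 ∨ y ≠ 0 := by
    by_contra hcon
    push_neg at hcon
    apply hz
    rw [hzd, hcon.1, hcon.2, smul_zero, add_zero]
  have hx2 : 0 ≤ (B x x).re := by
    rcases eq_or_ne x 0 with h | h
    · simp [h]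
    · exact le_of_lt (hg'.2 x hx h)
  have hy2 : 0 ≤ (B y y).re := by
    rcases eq_or_ne y 0 with h | h
    · simp [h]
    · exact le_of_lt (hg'.2 y hy h)
  rw [Complex.add_re]
  rcases hxy with h | h
  · have := hg'.2 x hx h; linarith
  · have := hg'.2 y hy h; linarith

open scoped RealInnerProductSpace

set_option maxHeartbeats 2000000 in
private lemma aux_key [FiniteDimensional ℂ L] (B : LinearMap.BilinForm ℂ L)
    (σ τ : L →ₗ[ℝ] L)
    (hσ2 : ∀ z, σ (σ z) = z) (hτ2 : ∀ z, τ (τ z) = z)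
    (hσlie : ∀ z w, σ ⁅z, w⁆ = ⁅σ z, σ w⁆) (hτlie : ∀ z w, τ ⁅z, w⁆ = ⁅τ z, τ w⁆)
    (hσB : ∀ z w, B (σ z) (σ w) = starRingEnd ℂ (B z w))
    (hτB : ∀ z w, B (τ z) (τ w) = starRingEnd ℂ (B z w))
    (hBsymm : ∀ x y : L, B x y = B y x)
    (hτpos : ∀ z, z ≠ 0 → 0 < (B z (τ z)).re) :
    ∃ τ' : L →ₗ[ℝ] L,
      (∀ z, σ (τ' z) = τ' (σ z)) ∧
      (∀ z, τ' (τ' z) = z) ∧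
      (∀ z w, τ' ⁅z, w⁆ = ⁅τ' z, τ' w⁆) ∧
      (∀ z w, B (τ' z) (τ' w) = starRingEnd ℂ (B z w)) ∧
      (∀ z, z ≠ 0 → 0 < (B z (τ' z)).re) ∧
      (∀ z, σ z = z → τ z = z → τ' z = z) := by
  classical
  haveI : FiniteDimensional ℝ L := Module.Finite.trans ℂ L
  have hBsmul1 : ∀ (t : ℝ) (x w : L), B (t • x) w = t • B x w := by
    intro t x w
    rw [← Complex.coe_smul, map_smul, LinearMap.smul_apply, Complex.coe_smul]
  have hBsmul2 : ∀ (t : ℝ) (x w : L), B x (t • w) = t • B x w := by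
    intro t x w
    rw [← Complex.coe_smul, map_smul, Complex.coe_smul]
  have hσB' : ∀ z w, B (σ z) w = starRingEnd ℂ (B z (σ w)) := by
    intro z w
    conv_lhs => rw [show w = σ (σ w) from (hσ2 w).symm]
    exact hσB z (σ w)
  have hτB' : ∀ z w, B (τ z) w = starRingEnd ℂ (B z (τ w)) := by
    intro z w
    conv_lhs => rw [show w = τ (τ w) from (hτ2 w).symm]
    exact hτB z (τ w)
  have hconjsym : ∀ z w : L, (B w (τ z)).re = (B z (τ w)).re := by
    intro z w
    have e : B w (τ z) = starRingEnd ℂ (B z (τ w)) := by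
      rw [hBsymm w (τ z)]; exact hτB' z w
    rw [e, Complex.conj_re]
  let core : InnerProductSpace.Core ℝ L :=
  { inner := fun z w => (B z (τ w)).re
    conj_inner_symm := by
      intro x y
      simp only [starRingEnd_apply, star_trivial]
      exact hconjsym x y
    re_inner_nonneg := by
      intro x
      rcases eq_or_ne x 0 with h | h
      · simp [h]
      · exact le_of_lt (hτpos x h)
    definite := by
      intro x hx
      by_contra h
      exact absurd hx (ne_of_gt (hτpos x h))
    add_left := by
      intro x y z
      simp only [map_add, LinearMap.add_apply, Complex.add_re]
    smul_left := by
      intro x y r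
      simp only [starRingEnd_apply, star_trivial]
      show (B (r • x) (τ y)).re = r * (B x (τ y)).re
      rw [hBsmul1]
      rw [show (r • B x (τ y)) = ((r:ℝ):ℂ) * B x (τ y) from by
        rw [← Complex.coe_smul, smul_eq_mul]]
      exact Complex.re_ofReal_mul r _ }
  letI : NormedAddCommGroup L := core.toNormedAddCommGroup
  letI : InnerProductSpace ℝ L := InnerProductSpace.ofCore core.toCore
  have hinner : ∀ z w : L, ⟪z, w⟫ = (B z (τ w)).re := fun z w => rfl
  let N : L →ₗ[ℝ] L := σ ∘ₗ τ
  have hNapp : ∀ z, N z = σ (τ z) := fun _ => rfl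
  have hNsym : N.IsSymmetric := by
    intro z w
    rw [hinner, hinner, hNapp, hNapp]
    calc (B (σ (τ z)) (τ w)).re
        = (starRingEnd ℂ (B (τ z) (σ (τ w)))).re := by rw [hσB']
      _ = (B (τ z) (σ (τ w))).re := Complex.conj_re _
      _ = (starRingEnd ℂ (B z (τ (σ (τ w))))).re := by rw [hτB']
      _ = (B z (τ (σ (τ w)))).re := Complex.conj_re _
  have hn : Module.finrank ℝ L = Module.finrank ℝ L := rfl
  let b := hNsym.eigenvectorBasis hn
  let μ : Fin (Module.finrank ℝ L) → ℝ := hNsym.eigenvalues hn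
  have hb : ∀ i, N (b i) = μ i • b i := by
    intro i
    have := hNsym.apply_eigenvectorBasis hn i
    simpa [b, μ] using this
  have hτστ : ∀ z, τ (σ (N z)) = z := fun z => by rw [hNapp, hσ2, hτ2]
  have hbne : ∀ i, b i ≠ 0 := fun i => b.toBasis.ne_zero i
  have hμ : ∀ i, μ i ≠ 0 := by
    intro i h
    have h0 : N (b i) = 0 := by rw [hb i, h, zero_smul]
    have hcon := hτστ (b i)
    rw [h0, map_zero, map_zero] at hcon
    exact hbne i hcon.symm
  have habs : ∀ i, |μ i| ≠ 0 := fun i => abs_ne_zero.mpr (hμ i)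
  have hτσb : ∀ i, τ (σ (b i)) = (μ i)⁻¹ • b i := by
    intro i
    have h1 : b i = μ i • τ (σ (b i)) := by
      conv_lhs => rw [← hτστ (b i), hb i, map_smul, map_smul]
    conv_rhs => rw [h1]
    rw [smul_smul, inv_mul_cancel₀ (hμ i), one_smul]
  have hσbN : ∀ i, N (σ (b i)) = (μ i)⁻¹ • σ (b i) := by
    intro i
    rw [hNapp, hτσb i, map_smul]
  have hτbσ : ∀ i, σ (b i) = (μ i)⁻¹ • τ (b i) := by
    intro i
    have h1 : τ (b i) = μ i • σ (b i) := by
      have h2 := congrArg σ (hb i)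
      rw [hNapp, hσ2, map_smul] at h2
      exact h2
    rw [h1, smul_smul, inv_mul_cancel₀ (hμ i), one_smul]
  have hτbN : ∀ i, N (τ (b i)) = (μ i)⁻¹ • τ (b i) := by
    intro i
    rw [hNapp, hτ2, hτbσ i]
  let F : (ℝ → ℝ) → (L →ₗ[ℝ] L) := fun f => b.toBasis.constr ℝ (fun i => f (μ i) • b i)
  have hFb : ∀ (f : ℝ → ℝ) i, F f (b i) = f (μ i) • b i := by
    intro f i
    have := b.toBasis.constr_basis ℝ (fun j => f (μ j) • b j) i
    simpa [F, OrthonormalBasis.coe_toBasis] using this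
  have ext1 : ∀ (f g : L →ₗ[ℝ] L), (∀ i, f (b i) = g (b i)) → ∀ z, f z = g z := by
    intro f g h z
    have : f = g := by
      apply b.toBasis.ext
      intro i
      simpa [OrthonormalBasis.coe_toBasis] using h i
    rw [this]
  have Hf : ∀ (f : ℝ → ℝ) (c : ℝ) (v : L), N v = c • v → F f v = f c • v := by
    intro f c v hv
    have hrep : ∀ i, μ i * ⟪b i, v⟫ = c * ⟪b i, v⟫ := by
      intro i
      have h1 := hNsym (b i) v
      rw [hb i, hv, real_inner_smul_left, real_inner_smul_right] at h1
      exact h1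
    have e1 : F f v = ∑ i, ⟪b i, v⟫ • (f (μ i) • b i) := by
      conv_lhs => rw [← b.sum_repr' v]
      rw [map_sum]
      simp only [map_smul, hFb]
    have e2 : f c • v = ∑ i, ⟪b i, v⟫ • (f c • b i) := by
      conv_lhs => rw [← b.sum_repr' v, Finset.smul_sum]
      apply Finset.sum_congr rfl
      intro i _
      rw [smul_comm]
    rw [e1, e2]
    apply Finset.sum_congr rfl
    intro i _
    rcases eq_or_ne (⟪b i, v⟫) 0 with h | h
    · rw [h, zero_smul, zero_smul]
    · rw [mul_right_cancel₀ h (hrep i)]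
  let ψ : L →ₗ[ℝ] L := F (fun x => |x|)
  let ψ' : L →ₗ[ℝ] L := F (fun x => |x|⁻¹)
  have Hψ : ∀ (c : ℝ) (v : L), N v = c • v → ψ v = |c| • v := fun c v h => Hf (fun x => |x|) c v h
  have Hψ' : ∀ (c : ℝ) (v : L), N v = c • v → ψ' v = |c|⁻¹ • v := fun c v h => Hf (fun x => |x|⁻¹) c v h
  have hψb : ∀ i, ψ (b i) = |μ i| • b i := fun i => Hψ (μ i) (b i) (hb i)
  have hψ'b : ∀ i, ψ' (b i) = |μ i|⁻¹ • b i := fun i => Hψ' (μ i) (b i) (hb i)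
  have hψψ' : ∀ z, ψ (ψ' z) = z := by
    refine ext1 (ψ ∘ₗ ψ') LinearMap.id ?_
    intro i
    simp only [LinearMap.comp_apply, LinearMap.id_apply, hψ'b, map_smul, hψb, smul_smul]
    rw [inv_mul_cancel₀ (habs i), one_smul]
  have hσψ : ∀ z, σ (ψ z) = ψ' (σ z) := by
    refine ext1 (σ ∘ₗ ψ) (ψ' ∘ₗ σ) ?_
    intro i
    simp only [LinearMap.comp_apply, hψb, map_smul]
    rw [Hψ' _ _ (hσbN i), abs_inv, inv_inv]
  have hτψ : ∀ z, τ (ψ z) = ψ' (τ z) := by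
    refine ext1 (τ ∘ₗ ψ) (ψ' ∘ₗ τ) ?_
    intro i
    simp only [LinearMap.comp_apply, hψb, map_smul]
    rw [Hψ' _ _ (hτbN i), abs_inv, inv_inv]
  have hτψ' : ∀ z, τ (ψ' z) = ψ (τ z) := by
    refine ext1 (τ ∘ₗ ψ') (ψ ∘ₗ τ) ?_
    intro i
    simp only [LinearMap.comp_apply, hψ'b, map_smul]
    rw [Hψ _ _ (hτbN i), abs_inv]
  have hψ'N : ∀ z, ψ' (N z) = ψ (τ (σ z)) := by
    refine ext1 (ψ' ∘ₗ N) (ψ ∘ₗ (τ ∘ₗ σ)) ?_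
    intro i
    simp only [LinearMap.comp_apply]
    rw [hb i, map_smul, hψ'b, hτσb i, map_smul, hψb, smul_smul, smul_smul]
    congr 1
    rcases abs_choice (μ i) with h | h <;> rw [h]
    · exact mul_comm _ _
    · rw [inv_neg, mul_neg, mul_neg, mul_inv_cancel₀ (hμ i), inv_mul_cancel₀ (hμ i)]
  have hNlie : ∀ z w, N ⁅z, w⁆ = ⁅N z, N w⁆ := by
    intro z w
    show σ (τ ⁅z, w⁆) = ⁅N z, N w⁆
    rw [hτlie, hσlie]
    rfl
  have hψlie_bb : ∀ i j, ψ ⁅b i, b j⁆ = ⁅ψ (b i), ψ (b j)⁆ := by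
    intro i j
    have hNbr : N ⁅b i, b j⁆ = (μ i * μ j) • ⁅b i, b j⁆ := by
      rw [hNlie, hb i, hb j, smul_lie, lie_smul, smul_smul]
    rw [Hψ _ _ hNbr, hψb i, hψb j, smul_lie, lie_smul, smul_smul, abs_mul]
  have hψlie : ∀ u v, ψ ⁅u, v⁆ = ⁅ψ u, ψ v⁆ := by
    have step1 : ∀ j (u : L), ψ ⁅u, b j⁆ = ⁅ψ u, ψ (b j)⁆ := by
      intro j
      let A : L →ₗ[ℝ] L :=
        { toFun := fun u => ⁅u, b j⁆
          map_add' := fun x y => by simp only [add_lie]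
          map_smul' := fun t x => by simp only [smul_lie, RingHom.id_apply] }
      let C : L →ₗ[ℝ] L :=
        { toFun := fun u => ⁅ψ u, ψ (b j)⁆
          map_add' := fun x y => by simp only [map_add, add_lie]
          map_smul' := fun t x => by simp only [map_smul, smul_lie, RingHom.id_apply] }
      exact ext1 (ψ ∘ₗ A) C (fun i => hψlie_bb i j)
    intro u v
    let A : L →ₗ[ℝ] L :=
      { toFun := fun w => ⁅u, w⁆
        map_add' := fun x y => by simp only [lie_add]
        map_smul' := fun t x => by simp only [lie_smul, RingHom.id_apply] }
    let C : L →ₗ[ℝ] L :=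
      { toFun := fun w => ⁅ψ u, ψ w⁆
        map_add' := fun x y => by simp only [map_add, lie_add]
        map_smul' := fun t x => by simp only [map_smul, lie_smul, RingHom.id_apply] }
    exact ext1 (ψ ∘ₗ A) C (fun j => step1 j u) v
  have hBN : ∀ u v, B (N u) (N v) = B u v := by
    intro u v
    rw [hNapp, hNapp, hσB, hτB, Complex.conj_conj]
  have hBbb : ∀ i j, B (ψ (b i)) (ψ (b j)) = B (b i) (b j) := by
    intro i j
    have hc : B (b i) (b j) = ((μ i * μ j : ℝ) : ℂ) * B (b i) (b j) := by
      conv_lhs => rw [← hBN (b i) (b j), hb i, hb j]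
      rw [hBsmul1, hBsmul2, smul_smul]
      rw [← Complex.coe_smul, smul_eq_mul, Complex.ofReal_mul]
    rw [hψb i, hψb j, hBsmul1, hBsmul2, smul_smul, ← Complex.coe_smul, smul_eq_mul]
    rcases eq_or_ne (μ i * μ j) 1 with h | h
    · rw [show |μ i| * |μ j| = 1 from by rw [← abs_mul, h, abs_one], Complex.ofReal_one, one_mul]
    · have h0 : B (b i) (b j) = 0 := by
        by_contra hne
        apply h
        have h1 : ((μ i * μ j : ℝ) : ℂ) * B (b i) (b j) = 1 * B (b i) (b j) := by
          rw [one_mul, ← hc]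
        have h2 := mul_right_cancel₀ hne h1
        exact_mod_cast h2
      rw [h0, mul_zero]
  have ext1C : ∀ (f g : L →ₗ[ℝ] ℂ), (∀ i, f (b i) = g (b i)) → ∀ z, f z = g z := by
    intro f g h z
    have : f = g := by
      apply b.toBasis.ext
      intro i
      simpa [OrthonormalBasis.coe_toBasis] using h i
    rw [this]
  have hψB : ∀ u v, B (ψ u) (ψ v) = B u v := by
    have step1 : ∀ j (u : L), B (ψ u) (ψ (b j)) = B u (b j) := by
      intro j
      let A : L →ₗ[ℝ] ℂ :=
        { toFun := fun u => B (ψ u) (ψ (b j))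
          map_add' := fun x y => by simp only [map_add, LinearMap.add_apply]
          map_smul' := fun t x => by simp only [map_smul, hBsmul1, RingHom.id_apply] }
      let C : L →ₗ[ℝ] ℂ :=
        { toFun := fun u => B u (b j)
          map_add' := fun x y => by simp only [map_add, LinearMap.add_apply]
          map_smul' := fun t x => by simp only [hBsmul1, RingHom.id_apply] }
      exact ext1C A C (fun i => hBbb i j)
    intro u v
    let A : L →ₗ[ℝ] ℂ :=
      { toFun := fun w => B (ψ u) (ψ w)
        map_add' := fun x y => by simp only [map_add]
        map_smul' := fun t x => by simp only [map_smul, hBsmul2, RingHom.id_apply] }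
    let C : L →ₗ[ℝ] ℂ :=
      { toFun := fun w => B u w
        map_add' := fun x y => by simp only [map_add]
        map_smul' := fun t x => by simp only [hBsmul2, RingHom.id_apply] }
    exact ext1C A C (fun j => step1 j u) v
  have hpos' : ∀ z : L, z ≠ 0 → 0 < ⟪z, ψ' z⟫ := by
    intro z hz
    have hex : ∃ i, ⟪b i, z⟫ ≠ 0 := by
      by_contra hcon
      push_neg at hcon
      apply hz
      conv_lhs => rw [← b.sum_repr' z]
      exact Finset.sum_eq_zero fun i _ => by rw [hcon i, zero_smul]
    have hψ'z : ψ' z = ∑ i, (⟪b i, z⟫ * |μ i|⁻¹) • b i := by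
      conv_lhs => rw [← b.sum_repr' z]
      rw [map_sum]
      apply Finset.sum_congr rfl
      intro i _
      rw [map_smul, hψ'b, smul_smul]
    have hexp : ⟪z, ψ' z⟫ = ∑ i, ⟪b i, z⟫ ^ 2 * |μ i|⁻¹ := by
      rw [hψ'z, inner_sum]
      apply Finset.sum_congr rfl
      intro i _
      rw [real_inner_smul_right, real_inner_comm]
      ring
    rw [hexp]
    obtain ⟨i0, hi0⟩ := hex
    apply Finset.sum_pos'
    · intro i _
      have h1 : (0:ℝ) ≤ ⟪b i, z⟫ ^ 2 := sq_nonneg _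
      have h2 : (0:ℝ) ≤ |μ i|⁻¹ := inv_nonneg.mpr (abs_nonneg _)
      exact mul_nonneg h1 h2
    · refine ⟨i0, Finset.mem_univ i0, ?_⟩
      have h1 : (0:ℝ) < ⟪b i0, z⟫ ^ 2 :=
        lt_of_le_of_ne (sq_nonneg _) (Ne.symm (pow_ne_zero 2 hi0))
      have h2 : (0:ℝ) < |μ i0|⁻¹ := inv_pos.mpr (abs_pos.mpr (hμ i0))
      exact mul_pos h1 h2
  have hposB : ∀ z : L, z ≠ 0 → 0 < (B z (ψ (τ z))).re := by
    intro z hz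
    have e : (B z (ψ (τ z))).re = ⟪z, ψ' z⟫ := by
      rw [hinner z (ψ' z), hτψ' z]
    rw [e]
    exact hpos' z hz
  have hfix : ∀ z, σ z = z → τ z = z → ψ (τ z) = z := by
    intro z h1 h2
    have hNz : N z = (1:ℝ) • z := by rw [hNapp, h2, h1, one_smul]
    rw [h2, Hψ 1 z hNz, abs_one, one_smul]
  refine ⟨ψ ∘ₗ τ, ?_, ?_, ?_, ?_, hposB, hfix⟩
  · intro z
    show σ (ψ (τ z)) = ψ (τ (σ z))
    rw [hσψ (τ z)]
    exact hψ'N z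
  · intro z
    show ψ (τ (ψ (τ z))) = z
    rw [hτψ (τ z), hτ2, hψψ']
  · intro z w
    show ψ (τ ⁅z, w⁆) = ⁅ψ (τ z), ψ (τ w)⁆
    rw [hτlie, hψlie]
  · intro z w
    show B (ψ (τ z)) (ψ (τ w)) = starRingEnd ℂ (B z w)
    rw [hψB, hτB]

theorem exists_cartanInvolution_fixing_mem_inter' [FiniteDimensional ℂ L]
    (B : LinearMap.BilinForm ℂ L) (hBsymm : ∀ x y : L, B x y = B y x)
    (g g' : LieSubalgebra ℝ L)
    (hg : IsRealSlice B g) (hg' : IsCompactRealForm B g') :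
    ∀ x : ↥g, (x : L) ∈ g' →
      ∃ θ : ↥g →ₗ[ℝ] ↥g,
        ((∀ x, θ (θ x) = x) ∧
         (∀ x y : ↥g, B (θ x : L) (y : L) = B (x : L) (θ y : L)) ∧
         (∀ x : ↥g, x ≠ 0 → 0 < (B (x : L) (θ x : L)).re)) ∧
        (∀ x y : ↥g, θ ⁅x, y⁆ = ⁅θ x, θ y⁆) ∧ θ x = x := by
  intro x hx
  obtain ⟨σ, hσfix, hσmem, hσ2, hσlie, hσdec⟩ := aux_exists_conj g hg.1
  obtain ⟨τ, hτfix, hτmem, hτ2, hτlie, hτdec⟩ := aux_exists_conj g' hg'.1.1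
  have hσB := aux_conjB B hg σ hσdec
  have hτB := aux_conjB B hg'.1 τ hτdec
  have hτpos := aux_pos B hBsymm hg' τ hτdec
  obtain ⟨τ', hcomm, hτ'2, hτ'lie, hτ'B, hτ'pos, hτ'fix⟩ :=
    aux_key B σ τ hσ2 hτ2 hσlie hτlie hσB hτB hBsymm hτpos
  have hmem' : ∀ z : ↥g, τ' (z : L) ∈ g := by
    intro z
    apply hσmem
    rw [hcomm (z : L), hσfix (z : L) z.2]
  let θ : ↥g →ₗ[ℝ] ↥g :=
    { toFun := fun z => ⟨τ' (z : L), hmem' z⟩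
      map_add' := fun z w => Subtype.ext (by
        show τ' ((z : L) + (w : L)) = τ' (z : L) + τ' (w : L)
        rw [map_add])
      map_smul' := fun t z => Subtype.ext (by
        show τ' (t • (z : L)) = t • τ' (z : L)
        rw [map_smul]) }
  have hθcoe : ∀ a : ↥g, (θ a : L) = τ' (a : L) := fun _ => rfl
  refine ⟨θ, ⟨?_, ?_, ?_⟩, ?_, ?_⟩
  · intro a
    exact Subtype.ext (by rw [hθcoe, hθcoe, hτ'2])
  · intro a c
    rw [hθcoe, hθcoe]
    have h1 : B (τ' (a : L)) ((c : L)) = starRingEnd ℂ (B (a : L) (τ' (c : L))) := by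
      conv_lhs => rw [show (c : L) = τ' (τ' (c : L)) from (hτ'2 _).symm]
      exact hτ'B _ _
    rw [h1]
    have him := hg.2 (a : L) a.2 (τ' (c : L)) (hmem' c)
    exact Complex.conj_eq_iff_im.mpr him
  · intro a ha
    rw [hθcoe]
    refine hτ'pos (a : L) ?_
    intro h
    exact ha (Subtype.ext h)
  · intro a c
    refine Subtype.ext ?_
    rw [hθcoe]
    show τ' ⁅(a : L), (c : L)⁆ = ⁅τ' (a : L), τ' (c : L)⁆
    exact hτ'lie _ _
  · exact Subtype.ext (by rw [hθcoe]; exact hτ'fix (x : L) (hσfix _ x.2) (hτfix _ hx))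

/-- If `g` is a real slice of `(L, B)` and `g̃` is a compact real form of
`(L, B)`, then every `x ∈ g ∩ g̃` is fixed by some Cartan involution of Lie algebras of
`B|g`. -/
theorem exists_cartanInvolution_fixing_mem_inter [FiniteDimensional ℂ L]
    (B : LinearMap.BilinForm ℂ L) (hBsymm : ∀ x y : L, B x y = B y x)
    (hBnd : B.Nondegenerate) (g g' : LieSubalgebra ℝ L)
    (hg : IsRealSlice B g) (hg' : IsCompactRealForm B g') :
    ∀ x : ↥g, (x : L) ∈ g' →
      ∃ θ : ↥g →ₗ[ℝ] ↥g, IsCartanInvolutionOfLieAlgebras B g θ ∧ θ x = x := by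
  intro x hx
  obtain ⟨θ, hm, hlie, hfix⟩ :=
    exists_cartanInvolution_fixing_mem_inter' B hBsymm g g' hg hg' x hx
  exact ⟨θ, ⟨hm, hlie⟩, hfix⟩
end

section
/- Let L be a finite-dimensional complex Lie algebra with a nondegenerate symmetric ℂ-bilinear form B, let g be a real slice of (L,B), and let σ : L → L be the conjugation of L with respect to g, i.e. the ℝ-linear involution determined by σ(x) = x for all x ∈ g and σ(i • v) = −i • σ(v) for all v ∈ L. Suppose u is a compact real form of (L,B). Then there exists a ℂ-linear Lie algebra automorphism φ of L satisfying B(φ(x), φ(y)) = B(x,y) for all x,y ∈ L, such that σ(φ(u)) ⊆ φ(u). -/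
/-!
Setup: a finite-dimensional complex Lie algebra `L` with a nondegenerate symmetric
`ℂ`-bilinear form `B` (a "holomorphic inner product"), viewed also as a real Lie algebra.
-/

variable {L : Type*} [LieRing L] [LieAlgebra ℂ L]

-- derived decomposition
theorem conj_decomp (w : LieSubalgebra ℝ L) (hw : IsRealForm w)
    (c : L →ₗ[ℝ] L) (hfix : ∀ x ∈ w, c x = x)
    (hI : ∀ v : L, c (Complex.I • v) = -(Complex.I • c v)) (z : L) :
    ∃ x ∈ w, ∃ y ∈ w, z = x + Complex.I • y ∧ c z = x - Complex.I • y := by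
  obtain ⟨x, hx, y, hy, hz⟩ := hw.2 z
  refine ⟨x, hx, y, hy, hz, ?_⟩
  rw [hz, map_add, hfix x hx, hI, hfix y hy, sub_eq_add_neg]

theorem conj_invol (w : LieSubalgebra ℝ L) (hw : IsRealForm w)
    (c : L →ₗ[ℝ] L) (hfix : ∀ x ∈ w, c x = x)
    (hI : ∀ v : L, c (Complex.I • v) = -(Complex.I • c v)) (z : L) :
    c (c z) = z := by
  obtain ⟨x, hx, y, hy, hz, hcz⟩ := conj_decomp w hw c hfix hI z
  rw [hcz, sub_eq_add_neg, map_add, hfix x hx, map_neg, hI, hfix y hy, hz, neg_neg]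

theorem conj_fixed (w : LieSubalgebra ℝ L) (hw : IsRealForm w)
    (c : L →ₗ[ℝ] L) (hfix : ∀ x ∈ w, c x = x)
    (hI : ∀ v : L, c (Complex.I • v) = -(Complex.I • c v)) (z : L) (hz : c z = z) :
    z ∈ w := by
  obtain ⟨x, hx, y, hy, hz1, hcz⟩ := conj_decomp w hw c hfix hI z
  have h2 : Complex.I • y + Complex.I • y = 0 := by
    have := hcz.symm.trans (hz.trans hz1)
    -- x - I y = x + I y
    have : -(Complex.I • y) = Complex.I • y := by
      rw [sub_eq_add_neg] at this
      exact add_left_cancel this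
    linear_combination (norm := abel) - this
  have hy0 : y = 0 := by
    have hIy : Complex.I • y = 0 := by
      have := h2
      rw [← two_smul ℂ] at this
      have h3 : ((2:ℂ))⁻¹ • ((2:ℂ) • (Complex.I • y)) = 0 := by rw [this, smul_zero]
      rwa [smul_smul, inv_mul_cancel₀ (by norm_num), one_smul] at h3
    have := congrArg (fun t => (-Complex.I) • t) hIy
    simpa [smul_smul, Complex.I_mul_I] using this
  rwa [hz1, hy0, smul_zero, add_zero]

theorem conj_smul (w : LieSubalgebra ℝ L)
    (c : L →ₗ[ℝ] L)
    (hI : ∀ v : L, c (Complex.I • v) = -(Complex.I • c v)) (z : ℂ) (v : L) :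
    c (z • v) = (starRingEnd ℂ) z • c v := by
  have key : ∀ (a b : ℝ) (x : L), ((a:ℂ) + (b:ℂ) * Complex.I) • x = a • x + b • (Complex.I • x) := by
    intro a b x
    rw [add_smul, mul_smul, Complex.coe_smul, Complex.coe_smul]
  have hz : z • v = z.re • v + z.im • (Complex.I • v) := by
    conv_lhs => rw [← Complex.re_add_im z]
    exact key _ _ _
  have hcz : (starRingEnd ℂ) z = ((z.re:ℂ) + ((-z.im : ℝ):ℂ) * Complex.I) := by
    simp [Complex.ext_iff]
  rw [hz, map_add, map_smul, map_smul, hI, hcz, key, neg_smul, smul_neg]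

theorem conj_bracket (w : LieSubalgebra ℝ L) (hw : IsRealForm w)
    (c : L →ₗ[ℝ] L) (hfix : ∀ x ∈ w, c x = x)
    (hI : ∀ v : L, c (Complex.I • v) = -(Complex.I • c v)) (a b : L) :
    c ⁅a, b⁆ = ⁅c a, c b⁆ := by
  obtain ⟨x, hx, y, hy, ha, hca⟩ := conj_decomp w hw c hfix hI a
  obtain ⟨x', hx', y', hy', hb, hcb⟩ := conj_decomp w hw c hfix hI b
  have hbr : ⁅a, b⁆ = (⁅x, x'⁆ - ⁅y, y'⁆) + Complex.I • (⁅x, y'⁆ + ⁅y, x'⁆) := by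
    rw [ha, hb]
    simp only [add_lie, lie_add, lie_smul, smul_lie, smul_add, smul_smul, Complex.I_mul_I,
      neg_one_smul, smul_sub]
    abel
  have mem1 : (⁅x, x'⁆ - ⁅y, y'⁆ : L) ∈ w := by
    exact w.toSubmodule.sub_mem (w.lie_mem hx hx') (w.lie_mem hy hy')
  have mem2 : (⁅x, y'⁆ + ⁅y, x'⁆ : L) ∈ w := by
    exact w.toSubmodule.add_mem (w.lie_mem hx hy') (w.lie_mem hy hx')
  rw [hbr, map_add, hfix _ mem1, hI, hfix _ mem2, hca, hcb]
  simp only [sub_eq_add_neg, add_lie, lie_add, lie_neg, neg_lie, lie_smul, smul_lie,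
    smul_add, smul_neg, neg_neg, smul_smul, Complex.I_mul_I, neg_one_smul, neg_add]
  abel

theorem conj_B (B : LinearMap.BilinForm ℂ L)
    (w : LieSubalgebra ℝ L) (hw : IsRealForm w)
    (hB : ∀ x ∈ w, ∀ y ∈ w, (B x y).im = 0)
    (c : L →ₗ[ℝ] L) (hfix : ∀ x ∈ w, c x = x)
    (hI : ∀ v : L, c (Complex.I • v) = -(Complex.I • c v)) (a b : L) :
    B (c a) (c b) = (starRingEnd ℂ) (B a b) := by
  obtain ⟨x, hx, y, hy, ha, hca⟩ := conj_decomp w hw c hfix hI a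
  obtain ⟨x', hx', y', hy', hb, hcb⟩ := conj_decomp w hw c hfix hI b
  have e1 : B a b = (B x x' - B y y') + Complex.I * (B x y' + B y x') := by
    rw [ha, hb]
    simp only [map_add, map_smul, LinearMap.add_apply, LinearMap.smul_apply, smul_eq_mul]
    linear_combination (B y) y' * Complex.I_sq
  have e2 : B (c a) (c b) = (B x x' - B y y') - Complex.I * (B x y' + B y x') := by
    rw [hca, hcb, sub_eq_add_neg, sub_eq_add_neg]
    simp only [map_add, map_neg, map_smul, LinearMap.add_apply, LinearMap.neg_apply,
      LinearMap.smul_apply, smul_eq_mul]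
    linear_combination (B y) y' * Complex.I_sq
  rw [e1, e2]
  have h1 := hB x hx x' hx'
  have h2 := hB y hy y' hy'
  have h3 := hB x hx y' hy'
  have h4 := hB y hy x' hx'
  apply Complex.ext <;>
    simp [Complex.add_re, Complex.sub_re, Complex.mul_re, Complex.add_im, Complex.sub_im,
      Complex.mul_im, h1, h2, h3, h4]

theorem exists_conj (w : LieSubalgebra ℝ L) (hw : IsRealForm w) :
    ∃ c : L →ₗ[ℝ] L, (∀ x ∈ w, c x = x) ∧
      ∀ v : L, c (Complex.I • v) = -(Complex.I • c v) := by
  classical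
  let J : L →ₗ[ℝ] L :=
    { toFun := fun v => Complex.I • v
      map_add' := fun a b => smul_add _ _ _
      map_smul' := fun r v => (smul_comm r Complex.I v).symm }
  let p : (↥w × ↥w) →ₗ[ℝ] L :=
    (w.toSubmodule.subtype.comp (LinearMap.fst ℝ ↥w ↥w)) +
      (J.comp (w.toSubmodule.subtype.comp (LinearMap.snd ℝ ↥w ↥w)))
  have hp : ∀ x y : ↥w, p (x, y) = (x : L) + Complex.I • (y : L) := fun x y => rfl
  have hinj : Function.Injective p := by
    rw [injective_iff_map_eq_zero]
    intro ⟨x, y⟩ h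
    rw [hp] at h
    have hx : (x : L) = Complex.I • (-(y : L)) := by
      rw [smul_neg, eq_neg_iff_add_eq_zero]; exact h
    have hx0 : (x : L) = 0 := hw.1 x x.2 (-(y:L)) (w.toSubmodule.neg_mem y.2) hx
    have hy0 : (y : L) = 0 := by
      have hIy : Complex.I • (y : L) = 0 := by
        rw [hx0, zero_add] at h; exact h
      have := congrArg (fun t => (-Complex.I) • t) hIy
      simpa [smul_smul, Complex.I_mul_I] using this
    ext
    · exact hx0
    · exact hy0
  have hsurj : Function.Surjective p := by
    intro z
    obtain ⟨x, hx, y, hy, hz⟩ := hw.2 z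
    exact ⟨(⟨x, hx⟩, ⟨y, hy⟩), hz.symm⟩
  let e := LinearEquiv.ofBijective p ⟨hinj, hsurj⟩
  let c : L →ₗ[ℝ] L :=
    (p.comp ((LinearMap.id).prodMap (-LinearMap.id))).comp e.symm.toLinearMap
  have key : ∀ x y : ↥w, c ((x : L) + Complex.I • (y : L)) = (x : L) - Complex.I • (y : L) := by
    intro x y
    have h1 : e.symm ((x : L) + Complex.I • (y : L)) = (x, y) := by
      apply e.injective
      rw [e.apply_symm_apply]
      exact (hp x y).symm ▸ rfl
    show p (((LinearMap.id).prodMap (-LinearMap.id)) (e.symm _)) = _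
    rw [h1]
    show p (x, -y) = _
    rw [hp]
    simp [sub_eq_add_neg]
  refine ⟨c, ?_, ?_⟩
  · intro x hx
    have := key ⟨x, hx⟩ 0
    simpa using this
  · intro v
    obtain ⟨x, hx, y, hy, hv⟩ := hw.2 v
    have hIv : Complex.I • v = ((-(⟨y, hy⟩ : ↥w) : ↥w) : L) + Complex.I • ((⟨x, hx⟩ : ↥w) : L) := by
      rw [hv, smul_add, smul_smul, Complex.I_mul_I, neg_one_smul]
      simp [add_comm]
    rw [hIv, key]
    have hcv : c v = x - Complex.I • y := by
      rw [hv]; exact key ⟨x, hx⟩ ⟨y, hy⟩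
    rw [hcv, smul_sub, smul_smul, Complex.I_mul_I, neg_one_smul]
    push_cast
    abel

/-- Let `g` be a real slice of `(L, B)` with conjugation `σ`
(the `ℝ`-linear involution of `L` fixing `g` pointwise and anti-commuting with `i`), and
let `u` be a compact real form of `(L, B)`.  Then there is a `ℂ`-linear Lie algebra
automorphism `φ` of `L` preserving `B` such that `σ (φ u) ⊆ φ u`. -/
theorem exists_automorphism_conjugation_invariant [FiniteDimensional ℂ L]
    (B : LinearMap.BilinForm ℂ L) (hBsymm : ∀ x y : L, B x y = B y x)
    (hBnd : B.Nondegenerate) (g : LieSubalgebra ℝ L) (hg : IsRealSlice B g)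
    (σ : L →ₗ[ℝ] L) (hσfix : ∀ x ∈ g, σ x = x)
    (hσI : ∀ v : L, σ (Complex.I • v) = -(Complex.I • σ v))
    (u : LieSubalgebra ℝ L) (hu : IsCompactRealForm B u) :
    ∃ φ : L ≃ₗ⁅ℂ⁆ L, (∀ x y : L, B (φ x) (φ y) = B x y) ∧
      ∀ z ∈ (u : Set L), σ (φ z) ∈ ⇑φ '' (u : Set L) := by
  classical
  obtain ⟨τ, hτfix, hτI⟩ := exists_conj u hu.1.1
  -- basic properties
  have hττ : ∀ z : L, τ (τ z) = z := conj_invol u hu.1.1 τ hτfix hτI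
  have hσσ : ∀ z : L, σ (σ z) = z := conj_invol g hg.1 σ hσfix hσI
  have hτsmul : ∀ (z : ℂ) (v : L), τ (z • v) = (starRingEnd ℂ) z • τ v :=
    conj_smul u τ hτI
  have hσsmul : ∀ (z : ℂ) (v : L), σ (z • v) = (starRingEnd ℂ) z • σ v :=
    conj_smul g σ hσI
  have hτB : ∀ a b : L, B (τ a) (τ b) = (starRingEnd ℂ) (B a b) :=
    conj_B B u hu.1.1 hu.1.2 τ hτfix hτI
  have hσB : ∀ a b : L, B (σ a) (σ b) = (starRingEnd ℂ) (B a b) :=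
    conj_B B g hg.1 hg.2 σ hσfix hσI
  have hτbr : ∀ a b : L, τ ⁅a, b⁆ = ⁅τ a, τ b⁆ := conj_bracket u hu.1.1 τ hτfix hτI
  have hσbr : ∀ a b : L, σ ⁅a, b⁆ = ⁅σ a, σ b⁆ := conj_bracket g hg.1 σ hσfix hσI
  have hτswap : ∀ a b : L, B (τ a) b = (starRingEnd ℂ) (B a (τ b)) := by
    intro a b
    have := hτB a (τ b)
    rwa [hττ] at this
  have hσswap : ∀ a b : L, B (σ a) b = (starRingEnd ℂ) (B a (σ b)) := by
    intro a b
    have := hσB a (σ b)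
    rwa [hσσ] at this
  -- the complex-linear operator Λ = σ ∘ τ and ρ = Λ²
  let Λ : L →ₗ[ℂ] L :=
    { toFun := fun v => σ (τ v)
      map_add' := fun a b => by simp
      map_smul' := fun z v => by
        simp only [RingHom.id_apply]
        rw [hτsmul, hσsmul, Complex.conj_conj] }
  have hΛ : ∀ v : L, Λ v = σ (τ v) := fun _ => rfl
  let ρ : L →ₗ[ℂ] L := Λ ∘ₗ Λ
  have hρ : ∀ v : L, ρ v = σ (τ (σ (τ v))) := fun _ => rfl
  have hρσρ : ∀ v : L, ρ (σ (ρ v)) = σ v := by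
    intro v; simp only [hρ, hσσ, hττ]
  have hρτρ : ∀ v : L, ρ (τ (ρ v)) = τ v := by
    intro v; simp only [hρ, hσσ, hττ]
  have hρτσ : ∀ v : L, ρ (τ (σ v)) = σ (τ v) := by
    intro v; simp only [hρ, hσσ, hττ]
  have hρB : ∀ a b : L, B (ρ a) (ρ b) = B a b := by
    intro a b
    simp only [hρ]
    rw [hσB, hτB, hσB, hτB]
    simp only [Complex.conj_conj]
  have hρbr : ∀ a b : L, ρ ⁅a, b⁆ = ⁅ρ a, ρ b⁆ := by
    intro a b; simp only [hρ, hτbr, hσbr]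
  -- value of the inner product
  have hBnn : ∀ t : L, t ∈ u → 0 ≤ (B t t).re := by
    intro t ht
    by_cases h0 : t = 0
    · simp [h0]
    · exact le_of_lt (hu.2 t ht h0)
  have hinner_val : ∀ (x a b : L), a ∈ u → b ∈ u → x = a + Complex.I • b →
      B (τ x) x = B a a + B b b := by
    intro x a b ha hb hx
    have hτx : τ x = a - Complex.I • b := by
      rw [hx, map_add, hτfix a ha, hτI, hτfix b hb, sub_eq_add_neg]
    rw [hτx, hx]
    simp only [sub_eq_add_neg, map_add, map_neg, map_smul, LinearMap.add_apply,
      LinearMap.neg_apply, LinearMap.smul_apply, smul_eq_mul]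
    rw [hBsymm b a]
    linear_combination (B a) b * Complex.I_sq - Complex.I_sq * (B a) b - (B b) b * Complex.I_sq
  -- the inner product defined by B and τ
  let core : InnerProductSpace.Core ℂ L :=
    { inner := fun x y => B (τ x) y
      conj_inner_symm := by
        intro x y
        show (starRingEnd ℂ) (B (τ y) x) = B (τ x) y
        rw [← hτB, hττ, hBsymm]
      re_inner_nonneg := by
        intro x
        obtain ⟨a, ha, b, hb, hx, -⟩ := conj_decomp u hu.1.1 τ hτfix hτI x
        show 0 ≤ (B (τ x) x).re
        rw [hinner_val x a b ha hb hx, Complex.add_re]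
        exact add_nonneg (hBnn a ha) (hBnn b hb)
      add_left := by
        intro x y z
        show B (τ (x + y)) z = B (τ x) z + B (τ y) z
        rw [map_add, map_add, LinearMap.add_apply]
      smul_left := by
        intro x y r
        show B (τ (r • x)) y = (starRingEnd ℂ) r * (B (τ x) y)
        rw [hτsmul, map_smul, LinearMap.smul_apply, smul_eq_mul]
      definite := by
        intro x hx
        obtain ⟨a, ha, b, hb, hxd, -⟩ := conj_decomp u hu.1.1 τ hτfix hτI x
        have hval : B (τ x) x = B a a + B b b := hinner_val x a b ha hb hxd
        have h0 : (B a a).re + (B b b).re = 0 := by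
          have : (B (τ x) x) = 0 := hx
          rw [hval] at this
          have := congrArg Complex.re this
          simpa using this
        have ha0 : a = 0 := by
          by_contra hne
          have h1 : 0 < (B a a).re := hu.2 a ha hne
          have h2 := hBnn b hb
          linarith
        have hb0 : b = 0 := by
          by_contra hne
          have h1 : 0 < (B b b).re := hu.2 b hb hne
          have h2 := hBnn a ha
          linarith
        rw [hxd, ha0, hb0, smul_zero, add_zero] }
  letI : NormedAddCommGroup L := core.toNormedAddCommGroup
  letI : InnerProductSpace ℂ L := InnerProductSpace.ofCore core.toCore
  have hip : ∀ x y : L, (inner ℂ x y : ℂ) = B (τ x) y := fun _ _ => rfl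
  -- Λ and ρ are symmetric operators
  have hsymΛ : Λ.IsSymmetric := by
    intro x y
    rw [hip, hip, hΛ, hΛ, hτswap, hσswap, Complex.conj_conj]
  have hsymρ : ρ.IsSymmetric := by
    intro x y
    show (inner ℂ (Λ (Λ x)) y : ℂ) = inner ℂ x (Λ (Λ y))
    rw [hsymΛ, hsymΛ]
  -- spectral theory
  set n := Module.finrank ℂ L with hnd
  have hn : Module.finrank ℂ L = n := rfl
  let b := hsymρ.eigenvectorBasis hn
  let μ := hsymρ.eigenvalues hn
  have heig : ∀ i, ρ (b i) = ((μ i : ℝ) : ℂ) • b i := fun i =>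
    hsymρ.apply_eigenvectorBasis hn i
  have hbne : ∀ i, b i ≠ 0 := by
    intro i
    have := b.toBasis.ne_zero i
    simpa using this
  have hΛinj : ∀ v : L, Λ v ≠ 0 → True := fun _ _ => trivial
  have hμpos : ∀ i, 0 < μ i := by
    intro i
    have h1 : (inner ℂ (b i) (ρ (b i)) : ℂ) = (μ i : ℂ) * (inner ℂ (b i) (b i) : ℂ) := by
      rw [heig, inner_smul_right]
    have h2 : (inner ℂ (b i) (b i) : ℂ) = ((‖b i‖ : ℂ)) ^ 2 := inner_self_eq_norm_sq_to_K (b i)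
    have h3 : ‖b i‖ = 1 := b.orthonormal.1 i
    have h4 : (inner ℂ (b i) (ρ (b i)) : ℂ) = (μ i : ℂ) := by
      rw [h1, h2, h3]; norm_num
    have h5 : (inner ℂ (b i) (ρ (b i)) : ℂ) = inner ℂ (Λ (b i)) (Λ (b i)) := by
      show (inner ℂ (b i) (Λ (Λ (b i))) : ℂ) = _
      exact (hsymΛ (b i) (Λ (b i))).symm
    have hΛne : Λ (b i) ≠ 0 := by
      intro h
      apply hbne i
      have : τ (σ (Λ (b i))) = b i := by
        rw [hΛ, hσσ, hττ]
      rw [h] at this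
      simpa using this.symm
    have h7 : (μ i : ℂ) = ((‖Λ (b i)‖ : ℝ) : ℂ) ^ 2 := by
      rw [← h4, h5]
      exact inner_self_eq_norm_sq_to_K _
    have h8 : μ i = ‖Λ (b i)‖ ^ 2 := by exact_mod_cast h7
    rw [h8]
    exact pow_pos (norm_pos_iff.mpr hΛne) 2
  -- the coefficient map and the fourth root φ
  have hKey : ∀ (F : L →ₗ[ℂ] L) (f : ℝ → ℝ), (∀ i, F (b i) = ((f (μ i) : ℝ) : ℂ) • b i) →
      ∀ (m : ℝ) (v : L), ρ v = ((m : ℝ) : ℂ) • v → F v = ((f m : ℝ) : ℂ) • v := by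
    intro F f hF m v hv
    have hrepr := b.toBasis.sum_repr v
    set a : Fin n → ℂ := fun i => b.toBasis.repr v i with ha
    have hcoef : ∀ i, ((μ i : ℂ) - (m : ℂ)) * a i = 0 := by
      have e1 : ρ v = ∑ i, (a i * (μ i : ℂ)) • b i := by
        conv_lhs => rw [← hrepr]
        rw [map_sum]
        refine Finset.sum_congr rfl fun i _ => ?_
        rw [map_smul]
        have hb : b.toBasis i = b i := by simp
        rw [hb, heig, smul_smul]
      have e2 : ((m : ℝ) : ℂ) • v = ∑ i, (a i * (m : ℂ)) • b i := by
        conv_lhs => rw [← hrepr]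
        rw [Finset.smul_sum]
        refine Finset.sum_congr rfl fun i _ => ?_
        have hb : b.toBasis i = b i := by simp
        rw [hb, smul_smul, mul_comm]
      have e3 : ∑ i, ((a i * (μ i : ℂ)) - (a i * (m : ℂ))) • b i = 0 := by
        rw [Finset.sum_congr rfl (fun i _ => sub_smul _ _ _), Finset.sum_sub_distrib,
          ← e1, ← e2, hv, sub_self]
      have hli := b.toBasis.linearIndependent
      rw [Fintype.linearIndependent_iff] at hli
      intro i
      have := hli (fun i => (a i * (μ i : ℂ)) - (a i * (m : ℂ))) ?_ i
      · linear_combination this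
      · rw [← e3]
        refine Finset.sum_congr rfl fun j _ => ?_
        have hb : b.toBasis j = b j := by simp
        rw [hb]
    conv_lhs => rw [← hrepr, map_sum]
    conv_rhs => rw [← hrepr, Finset.smul_sum]
    refine Finset.sum_congr rfl fun i _ => ?_
    have hb : b.toBasis i = b i := by simp
    rw [hb, map_smul, hF i, smul_smul, smul_smul]
    by_cases hai : a i = 0
    · rw [show b.toBasis.repr v i = a i from rfl, hai]
      simp
    · have hμm : μ i = m := by
        have := hcoef i
        rcases mul_eq_zero.mp this with h | h
        · have : (μ i : ℂ) = (m : ℂ) := by linear_combination h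
          exact_mod_cast this
        · exact absurd h hai
      rw [show b.toBasis.repr v i = a i from rfl, hμm, mul_comm]
  -- the positive fourth root of ρ
  let c : Fin n → ℝ := fun i => (μ i) ^ ((4:ℝ)⁻¹)
  have hcpos : ∀ i, 0 < c i := fun i => Real.rpow_pos_of_pos (hμpos i) _
  have hc4 : ∀ i, (c i) ^ (4:ℕ) = μ i := by
    intro i
    show ((μ i) ^ ((4:ℝ)⁻¹)) ^ (4:ℕ) = μ i
    rw [← Real.rpow_natCast ((μ i) ^ ((4:ℝ)⁻¹)) 4, ← Real.rpow_mul (le_of_lt (hμpos i))]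
    norm_num
  let φl : L →ₗ[ℂ] L := b.toBasis.constr ℂ (fun i => ((c i : ℝ) : ℂ) • b i)
  let ψl : L →ₗ[ℂ] L := b.toBasis.constr ℂ (fun i => (((c i)⁻¹ : ℝ) : ℂ) • b i)
  have hφb : ∀ i, φl (b i) = ((c i : ℝ) : ℂ) • b i := by
    intro i
    have h := b.toBasis.constr_basis ℂ (fun i => ((c i : ℝ) : ℂ) • b i) i
    have hb : b.toBasis i = b i := by simp
    rw [hb] at h
    exact h
  have hψb : ∀ i, ψl (b i) = (((c i)⁻¹ : ℝ) : ℂ) • b i := by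
    intro i
    have h := b.toBasis.constr_basis ℂ (fun i => (((c i)⁻¹ : ℝ) : ℂ) • b i) i
    have hb : b.toBasis i = b i := by simp
    rw [hb] at h
    exact h
  have hKφ : ∀ (m : ℝ) (v : L), ρ v = ((m:ℝ):ℂ) • v →
      φl v = ((m ^ ((4:ℝ)⁻¹) : ℝ) : ℂ) • v :=
    hKey φl (fun m => m ^ ((4:ℝ)⁻¹)) hφb
  have hKψ : ∀ (m : ℝ) (v : L), ρ v = ((m:ℝ):ℂ) • v →
      ψl v = (((m ^ ((4:ℝ)⁻¹))⁻¹ : ℝ) : ℂ) • v :=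
    hKey ψl (fun m => (m ^ ((4:ℝ)⁻¹))⁻¹) hψb
  -- eigenvector facts for τ (b i) and σ (b i)
  have hτeig : ∀ i, ρ (τ (b i)) = (((μ i)⁻¹ : ℝ) : ℂ) • τ (b i) := by
    intro i
    have h1 : τ (ρ (b i)) = ((μ i : ℝ) : ℂ) • τ (b i) := by
      rw [heig, hτsmul, Complex.conj_ofReal]
    have h2 := hρτρ (b i)
    rw [h1, map_smul] at h2
    have h3 : (((μ i)⁻¹ : ℝ) : ℂ) • (((μ i : ℝ) : ℂ) • ρ (τ (b i)))
        = (((μ i)⁻¹ : ℝ) : ℂ) • τ (b i) := by rw [h2]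
    rw [smul_smul, ← Complex.ofReal_mul, inv_mul_cancel₀ (ne_of_gt (hμpos i))] at h3
    rw [Complex.ofReal_one, one_smul] at h3
    rw [h3]
  have hσeig : ∀ i, ρ (σ (b i)) = (((μ i)⁻¹ : ℝ) : ℂ) • σ (b i) := by
    intro i
    have h1 : σ (ρ (b i)) = ((μ i : ℝ) : ℂ) • σ (b i) := by
      rw [heig, hσsmul, Complex.conj_ofReal]
    have h2 := hρσρ (b i)
    rw [h1, map_smul] at h2
    have h3 : (((μ i)⁻¹ : ℝ) : ℂ) • (((μ i : ℝ) : ℂ) • ρ (σ (b i)))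
        = (((μ i)⁻¹ : ℝ) : ℂ) • σ (b i) := by rw [h2]
    rw [smul_smul, ← Complex.ofReal_mul, inv_mul_cancel₀ (ne_of_gt (hμpos i))] at h3
    rw [Complex.ofReal_one, one_smul] at h3
    rw [h3]
  -- operator identities, proved on the basis
  have hφψ : ∀ v : L, φl (ψl v) = v := by
    have : φl ∘ₗ ψl = LinearMap.id := by
      apply b.toBasis.ext
      intro i
      simp only [LinearMap.comp_apply, LinearMap.id_apply, OrthonormalBasis.coe_toBasis]
      rw [hψb, map_smul, hφb, smul_smul, ← Complex.ofReal_mul,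
        inv_mul_cancel₀ (ne_of_gt (hcpos i)), Complex.ofReal_one, one_smul]
    intro v
    exact LinearMap.congr_fun this v
  have hψφ : ∀ v : L, ψl (φl v) = v := by
    have : ψl ∘ₗ φl = LinearMap.id := by
      apply b.toBasis.ext
      intro i
      simp only [LinearMap.comp_apply, LinearMap.id_apply, OrthonormalBasis.coe_toBasis]
      rw [hφb, map_smul, hψb, smul_smul, ← Complex.ofReal_mul,
        mul_inv_cancel₀ (ne_of_gt (hcpos i)), Complex.ofReal_one, one_smul]
    intro v
    exact LinearMap.congr_fun this v
  have hψψρ : ∀ v : L, ψl (ψl (ρ v)) = φl (φl v) := by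
    have : ψl ∘ₗ (ψl ∘ₗ ρ) = φl ∘ₗ φl := by
      apply b.toBasis.ext
      intro i
      simp only [LinearMap.comp_apply, OrthonormalBasis.coe_toBasis]
      rw [heig, map_smul, hψb, smul_smul, map_smul, hψb, smul_smul,
        hφb, map_smul, hφb, smul_smul]
      congr 1
      push_cast
      rw [show (((μ i):ℂ) * ((c i)⁻¹:ℂ)) * ((c i)⁻¹:ℂ) = ((μ i):ℂ) * (((c i):ℂ))⁻¹^2 by
        push_cast; ring]
      rw [show ((c i):ℂ) * ((c i):ℂ) = ((c i):ℂ)^2 by ring]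
      have hre : (μ i) * ((c i)⁻¹)^2 = (c i)^2 := by
        have h4 : μ i = (c i)^(4:ℕ) := (hc4 i).symm
        have hne : c i ≠ 0 := ne_of_gt (hcpos i)
        rw [h4]
        field_simp
      calc ((μ i):ℂ) * (((c i):ℂ))⁻¹^2 = (((μ i) * ((c i)⁻¹)^2 : ℝ) : ℂ) := by push_cast; ring
        _ = (((c i)^2 : ℝ) : ℂ) := by rw [hre]
        _ = ((c i):ℂ)^2 := by push_cast; ring
    intro v
    exact LinearMap.congr_fun this v
  -- semilinear bundles for τ and σ
  let τs : L →ₛₗ[starRingEnd ℂ] L :=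
    { toFun := fun v => τ v
      map_add' := fun a b => map_add τ a b
      map_smul' := fun z v => hτsmul z v }
  let σs : L →ₛₗ[starRingEnd ℂ] L :=
    { toFun := fun v => σ v
      map_add' := fun a b => map_add σ a b
      map_smul' := fun z v => hσsmul z v }
  have hτψφ : ∀ v : L, τ (ψl v) = φl (τ v) := by
    have : τs.comp ψl = φl.comp τs := by
      apply b.toBasis.ext
      intro i
      have hb : b.toBasis i = b i := by simp
      rw [hb]
      show τ (ψl (b i)) = φl (τ (b i))
      rw [hψb, hτsmul, Complex.conj_ofReal]
      rw [hKφ ((μ i)⁻¹) (τ (b i)) (hτeig i)]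
      have hval : ((μ i)⁻¹) ^ ((4:ℝ)⁻¹) = (c i)⁻¹ := by
        rw [Real.inv_rpow (le_of_lt (hμpos i))]
      rw [hval]
    intro v
    exact LinearMap.congr_fun this v
  have hσφψ : ∀ v : L, σ (φl v) = ψl (σ v) := by
    have : σs.comp φl = ψl.comp σs := by
      apply b.toBasis.ext
      intro i
      have hb : b.toBasis i = b i := by simp
      rw [hb]
      show σ (φl (b i)) = ψl (σ (b i))
      rw [hφb, hσsmul, Complex.conj_ofReal]
      rw [hKψ ((μ i)⁻¹) (σ (b i)) (hσeig i)]
      have hval : (((μ i)⁻¹) ^ ((4:ℝ)⁻¹))⁻¹ = c i := by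
        rw [Real.inv_rpow (le_of_lt (hμpos i)), inv_inv]
      rw [hval]
    intro v
    exact LinearMap.congr_fun this v
  -- φ preserves brackets
  let br : L →ₗ[ℂ] L →ₗ[ℂ] L := LinearMap.mk₂ ℂ (fun x y => ⁅x, y⁆) add_lie smul_lie lie_add lie_smul
  have hbr : ∀ x y : L, br x y = ⁅x, y⁆ := fun _ _ => rfl
  have heig2 : ∀ i j, ρ ⁅b i, b j⁆ = ((μ i * μ j : ℝ) : ℂ) • ⁅b i, b j⁆ := by
    intro i j
    rw [hρbr, heig i, heig j, smul_lie, lie_smul, smul_smul, ← Complex.ofReal_mul]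
  have hφbr : ∀ x y : L, φl ⁅x, y⁆ = ⁅φl x, φl y⁆ := by
    have : br.compr₂ φl = br.compl₁₂ φl φl := by
      apply LinearMap.ext_basis b.toBasis b.toBasis
      intro i j
      have hbi : b.toBasis i = b i := by simp
      have hbj : b.toBasis j = b j := by simp
      rw [hbi, hbj]
      show φl (br (b i) (b j)) = br (φl (b i)) (φl (b j))
      rw [hbr, hbr, hφb, hφb, smul_lie, lie_smul, smul_smul, ← Complex.ofReal_mul]
      rw [hKφ (μ i * μ j) ⁅b i, b j⁆ (heig2 i j)]
      rw [Real.mul_rpow (le_of_lt (hμpos i)) (le_of_lt (hμpos j))]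
    intro x y
    have h := LinearMap.congr_fun₂ this x y
    exact h
  -- φ preserves B
  have hφB : ∀ x y : L, B (φl x) (φl y) = B x y := by
    have : B.compl₁₂ φl φl = B := by
      apply LinearMap.ext_basis b.toBasis b.toBasis
      intro i j
      have hbi : b.toBasis i = b i := by simp
      have hbj : b.toBasis j = b j := by simp
      rw [hbi, hbj]
      show B (φl (b i)) (φl (b j)) = B (b i) (b j)
      rw [hφb, hφb]
      simp only [map_smul, LinearMap.smul_apply, smul_eq_mul]
      by_cases hB0 : B (b i) (b j) = 0
      · rw [hB0, mul_zero, mul_zero]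
      · have h1 := hρB (b i) (b j)
        rw [heig i, heig j] at h1
        simp only [map_smul, LinearMap.smul_apply, smul_eq_mul] at h1
        have h2 : (((μ i) * (μ j) : ℝ) : ℂ) * (B (b i) (b j)) = 1 * (B (b i) (b j)) := by
          push_cast
          linear_combination h1
        have h3 : (((μ i) * (μ j) : ℝ) : ℂ) = 1 := mul_right_cancel₀ hB0 h2
        have h4 : μ i * μ j = 1 := by exact_mod_cast h3
        have h5 : c i * c j = 1 := by
          show (μ i) ^ ((4:ℝ)⁻¹) * (μ j) ^ ((4:ℝ)⁻¹) = 1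
          rw [← Real.mul_rpow (le_of_lt (hμpos i)) (le_of_lt (hμpos j)), h4, Real.one_rpow]
        calc ((c j : ℝ):ℂ) * (((c i : ℝ):ℂ) * (B (b i) (b j)))
            = (((c i) * (c j) : ℝ):ℂ) * (B (b i) (b j)) := by push_cast; ring
          _ = B (b i) (b j) := by rw [h5, Complex.ofReal_one, one_mul]
    intro x y
    have h := LinearMap.congr_fun₂ this x y
    exact h
  -- assemble the Lie algebra automorphism
  let φ : L ≃ₗ⁅ℂ⁆ L :=
    { toLinearMap := φl
      map_lie' := by intro x y; exact hφbr x y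
      invFun := fun v => ψl v
      left_inv := hψφ
      right_inv := hφψ }
  have hφcoe : ∀ v : L, φ v = φl v := fun _ => rfl
  refine ⟨φ, ?_, ?_⟩
  · intro x y
    rw [hφcoe, hφcoe]
    exact hφB x y
  · intro z hz
    have hτz : τ z = z := hτfix z hz
    have ht : τ (ψl (σ (φl z))) = ψl (σ (φl z)) := by
      calc τ (ψl (σ (φl z))) = φl (τ (σ (φl z))) := hτψφ _
        _ = φl (τ (ψl (σ z))) := by rw [hσφψ]
        _ = φl (φl (τ (σ z))) := by rw [hτψφ]
        _ = ψl (ψl (ρ (τ (σ z)))) := (hψψρ _).symm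
        _ = ψl (ψl (σ (τ z))) := by rw [hρτσ]
        _ = ψl (σ (φl z)) := by rw [hτz, ← hσφψ]
    have hw0u : ψl (σ (φl z)) ∈ u := conj_fixed u hu.1.1 τ hτfix hτI _ ht
    refine ⟨ψl (σ (φl z)), hw0u, ?_⟩
    rw [hφcoe, hφcoe]
    exact hφψ _
end

section
/- Let V be a finite-dimensional real vector space with a nondegenerate symmetric bilinear form b, and let θ₁, θ₂ : V → V be two Cartan involutions of b, i.e. linear involutions such that (x,y) ↦ b(x, θⱼ(y)) is a positive-definite inner product on V for j = 1, 2. Then there exists an element A in the identity component of the orthogonal group O(b) = {A ∈ GL(V) : b(A x, A y) = b(x,y) for all x,y ∈ V} such that A ∘ θ₁ ∘ A⁻¹ = θ₂. -/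
open scoped RealInnerProductSpace


/-- The (matrix-entry) topology on the group of linear automorphisms of a
finite-dimensional real vector space, induced by the entries of the matrix in a fixed
basis; this is the standard topology of `GL(V)`. -/
noncomputable def autTopology (V : Type*) [AddCommGroup V] [Module ℝ V]
    [FiniteDimensional ℝ V] : TopologicalSpace (V ≃ₗ[ℝ] V) :=
  TopologicalSpace.induced
    (fun e i j => (Module.finBasis ℝ V).repr (e (Module.finBasis ℝ V j)) i)
    inferInstance

/-- `ψ` lies in the identity component of the subgroup `S` of `GL(V)` (with its subspace
topology). -/
def MemIdentityComponent (V : Type*) [AddCommGroup V] [Module ℝ V] [FiniteDimensional ℝ V]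
    (S : Subgroup (V ≃ₗ[ℝ] V)) (ψ : V ≃ₗ[ℝ] V) : Prop :=
  letI := autTopology V
  ∃ h : ψ ∈ S, (⟨ψ, h⟩ : S) ∈ connectedComponent (1 : S)

/-- The subgroup of `GL(V)` preserving a given (not necessarily real-valued) pairing `b`. -/
def isometrySubgroup {V : Type*} [AddCommGroup V] [Module ℝ V] {α : Type*}
    (b : V → V → α) : Subgroup (V ≃ₗ[ℝ] V) where
  carrier := {A | ∀ x y : V, b (A x) (A y) = b x y}
  one_mem' := fun _ _ => rfl
  mul_mem' := fun {a c} ha hc x y => (ha (c x) (c y)).trans (hc x y)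
  inv_mem' := by
    intro a ha x y
    have h1 : a⁻¹ = a.symm := rfl
    rw [h1]
    conv_rhs => rw [← a.apply_symm_apply x, ← a.apply_symm_apply y]
    exact (ha (a.symm x) (a.symm y)).symm ▸ rfl

/-- The automorphism group of a real Lie algebra, as a subgroup of `GL(g)`. -/
def lieAutSubgroup (g : Type*) [LieRing g] [LieAlgebra ℝ g] :
    Subgroup (g ≃ₗ[ℝ] g) where
  carrier := {A | ∀ x y : g, A ⁅x, y⁆ = ⁅A x, A y⁆}
  one_mem' := fun _ _ => rfl
  mul_mem' := fun {a c} ha hc x y => by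
    show a (c ⁅x, y⁆) = ⁅a (c x), a (c y)⁆
    rw [hc, ha]
  inv_mem' := by
    intro a ha x y
    have h1 : a⁻¹ = a.symm := rfl
    rw [h1]
    apply a.injective
    rw [ha, a.apply_symm_apply, a.apply_symm_apply, a.apply_symm_apply]

/-- A Cartan involution of a nondegenerate symmetric real bilinear form `b` on `V`:
a linear involution `θ` such that `(x, y) ↦ b x (θ y)` is a positive-definite
(symmetric) inner product on `V`. -/
def IsCartanInvolutionOfForm {V : Type*} [AddCommGroup V] [Module ℝ V]
    (b : LinearMap.BilinForm ℝ V) (θ : V →ₗ[ℝ] V) : Prop :=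
  (∀ x, θ (θ x) = x) ∧ (∀ x y, b (θ x) y = b x (θ y)) ∧ ∀ x, x ≠ 0 → 0 < b x (θ x)

section Aux

variable {V : Type*} [NormedAddCommGroup V] [InnerProductSpace ℝ V] [FiniteDimensional ℝ V]

theorem cartan_aux (b : LinearMap.BilinForm ℝ V) (θ₁ θ₂ : V →ₗ[ℝ] V)
    (hθ₁ : ∀ x, θ₁ (θ₁ x) = x) (hθ₁s : ∀ x y, b (θ₁ x) y = b x (θ₁ y))
    (hθ₂ : ∀ x, θ₂ (θ₂ x) = x) (hθ₂s : ∀ x y, b (θ₂ x) y = b x (θ₂ y))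
    (hpos₂ : ∀ x, x ≠ 0 → 0 < b x (θ₂ x))
    (hinner : ∀ x y, b x (θ₁ y) = ⟪x, y⟫) :
    ∃ A : V ≃ₗ[ℝ] V,
      MemIdentityComponent V (isometrySubgroup fun x y => b x y) A ∧
      ∀ x : V, A (θ₁ (A.symm x)) = θ₂ x := by
  classical
  -- the positive symmetric operator P = θ₁ ∘ θ₂
  set P : V →ₗ[ℝ] V := θ₁ ∘ₗ θ₂ with hP
  have hPapp : ∀ x, P x = θ₁ (θ₂ x) := fun x => rfl
  have hbinner : ∀ x y, b x y = ⟪x, θ₁ y⟫ := by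
    intro x y
    rw [← hinner x (θ₁ y), hθ₁]
  have hsym : P.IsSymmetric := by
    intro x y
    rw [← hinner, ← hinner, hPapp, hPapp, hθ₁s, hθ₁, hθ₂s, hθ₁ (θ₂ y)]
  have hPpos : ∀ x, x ≠ 0 → 0 < ⟪P x, x⟫ := by
    intro x hx
    have : ⟪P x, x⟫ = b x (θ₂ x) := by
      rw [← hinner, hPapp, hθ₁s, hθ₁, hθ₂s]
    rw [this]
    exact hpos₂ x hx
  -- spectral theory of P
  set n := Module.finrank ℝ V with hn
  have hfr : Module.finrank ℝ V = n := rfl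
  set onb := hsym.eigenvectorBasis hfr with honb
  set μ := hsym.eigenvalues hfr with hμ
  set B := onb.toBasis with hB
  have hBonb : ∀ i, B i = onb i := fun i => by rw [hB, OrthonormalBasis.coe_toBasis]
  have hPB : ∀ i, P (B i) = μ i • B i := by
    intro i
    rw [hBonb]
    exact hsym.apply_eigenvectorBasis hfr i
  have hμpos : ∀ i, 0 < μ i := by
    intro i
    have h1 : ⟪P (B i), B i⟫ = μ i * ⟪B i, B i⟫ := by
      rw [hPB, real_inner_smul_left]
    have h2 : ⟪B i, B i⟫ = 1 := by
      rw [hBonb]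
      have := onb.orthonormal.1 i
      rw [real_inner_self_eq_norm_mul_norm, this, one_mul]
    have h3 : 0 < ⟪P (B i), B i⟫ := hPpos _ (B.ne_zero i)
    rw [h1, h2, mul_one] at h3
    exact h3
  have hμne : ∀ i, μ i ≠ 0 := fun i => (hμpos i).ne'
  -- the one-parameter family of powers of P
  set Pt : ℝ → V →ₗ[ℝ] V := fun t => B.constr ℝ (fun i => (μ i ^ t : ℝ) • B i) with hPt
  have hPtB : ∀ t i, Pt t (B i) = (μ i ^ t) • B i := by
    intro t i
    rw [hPt]
    exact B.constr_basis ℝ _ i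
  have repr_Pt : ∀ t x i, B.repr (Pt t x) i = μ i ^ t * B.repr x i := by
    intro t x i
    conv_lhs => rw [← B.sum_repr x, map_sum]
    simp only [map_smul, hPtB, map_sum, Finsupp.smul_apply, smul_eq_mul]
    simp [Module.Basis.repr_self, Finsupp.single_apply, mul_comm]
  have repr_P : ∀ x i, B.repr (P x) i = μ i * B.repr x i := by
    intro x i
    have h1 := hsym.eigenvectorBasis_apply_self_apply hfr x i
    rw [hB, OrthonormalBasis.coe_toBasis_repr_apply, OrthonormalBasis.coe_toBasis_repr_apply]
    exact h1
  have Pt_comp : ∀ s t x, Pt s (Pt t x) = Pt (s + t) x := by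
    intro s t x
    apply B.repr.injective
    ext i
    rw [repr_Pt, repr_Pt, repr_Pt, ← mul_assoc, ← Real.rpow_add (hμpos i)]
  have Pt_zero : ∀ x, Pt 0 x = x := by
    intro x
    apply B.repr.injective
    ext i
    rw [repr_Pt, Real.rpow_zero, one_mul]
  have Pt_one : ∀ x, Pt 1 x = P x := by
    intro x
    apply B.repr.injective
    ext i
    rw [repr_Pt, repr_P, Real.rpow_one]
  -- eigenvectors of P are eigenvectors of Pt t
  have heig : ∀ (t c : ℝ) (v : V), 0 < c → P v = c • v → Pt t v = c ^ t • v := by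
    intro t c v hc hv
    apply B.repr.injective
    ext i
    rw [repr_Pt, map_smul, Finsupp.smul_apply, smul_eq_mul]
    by_cases hz : B.repr v i = 0
    · rw [hz, mul_zero, mul_zero]
    · have : μ i * B.repr v i = c * B.repr v i := by
        rw [← repr_P, hv, map_smul, Finsupp.smul_apply, smul_eq_mul]
      have hmc : μ i = c := mul_right_cancel₀ hz this
      rw [hmc]
  -- inner products in coordinates
  have inner_eq : ∀ x y : V, ⟪x, y⟫ = ∑ i, B.repr x i * B.repr y i := by
    intro x y
    rw [← onb.sum_inner_mul_inner x y]
    refine Finset.sum_congr rfl fun i _ => ?_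
    have h1 : ⟪x, onb i⟫ = B.repr x i := by
      rw [hB, OrthonormalBasis.coe_toBasis_repr_apply, onb.repr_apply_apply, real_inner_comm]
    have h2 : ⟪onb i, y⟫ = B.repr y i := by
      rw [hB, OrthonormalBasis.coe_toBasis_repr_apply, onb.repr_apply_apply]
    rw [h1, h2]
  have Pt_symm : ∀ t x y, ⟪Pt t x, y⟫ = ⟪x, Pt t y⟫ := by
    intro t x y
    rw [inner_eq, inner_eq]
    congr 1
    ext i
    rw [repr_Pt, repr_Pt]
    ring
  -- interaction of θ₁ with the powers of P
  have hPθB : ∀ i, P (θ₁ (B i)) = (μ i)⁻¹ • θ₁ (B i) := by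
    intro i
    have key : μ i • P (θ₁ (B i)) = θ₁ (B i) := by
      have : θ₁ (θ₂ (θ₁ (μ i • B i))) = θ₁ (θ₂ (θ₁ (θ₁ (θ₂ (B i))))) := by
        rw [← hPB, hPapp]
      rw [hθ₁ (θ₂ (B i)), hθ₂] at this
      calc μ i • P (θ₁ (B i)) = θ₁ (θ₂ (θ₁ (μ i • B i))) := by
            rw [hPapp]; simp only [map_smul]
        _ = θ₁ (B i) := this
    conv_rhs => rw [← key]
    rw [inv_smul_smul₀ (hμne i)]
  have hPtθB : ∀ t i, Pt t (θ₁ (B i)) = (μ i ^ (-t)) • θ₁ (B i) := by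
    intro t i
    have h1 : Pt t (θ₁ (B i)) = ((μ i)⁻¹) ^ t • θ₁ (B i) :=
      heig t _ _ (inv_pos.mpr (hμpos i)) (hPθB i)
    rw [h1, Real.inv_rpow (hμpos i).le, ← Real.rpow_neg (hμpos i).le]
  have hcomm : ∀ t x, Pt t (θ₁ x) = θ₁ (Pt (-t) x) := by
    intro t x
    have : (Pt t ∘ₗ θ₁) = (θ₁ ∘ₗ Pt (-t)) := by
      apply B.ext
      intro i
      simp only [LinearMap.coe_comp, Function.comp_apply]
      rw [hPtθB, hPtB, map_smul]
    exact DFunLike.congr_fun this x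
  -- each Pt t preserves b
  have hO : ∀ t x y, b (Pt t x) (Pt t y) = b x y := by
    intro t x y
    rw [hbinner, hbinner]
    have h1 : θ₁ (Pt t y) = Pt (-t) (θ₁ y) := by
      rw [hcomm (-t) y, neg_neg]
    rw [h1, ← Pt_symm, Pt_comp, neg_add_cancel, Pt_zero]
  -- Pt(-1) ∘ θ₁ = θ₂
  have hPinj : Function.Injective P := by
    intro u v huv
    have h1 : θ₂ (θ₁ (P u)) = u := by rw [hPapp, hθ₁, hθ₂]
    have h2 : θ₂ (θ₁ (P v)) = v := by rw [hPapp, hθ₁, hθ₂]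
    rw [← h1, ← h2, huv]
  have hfinal : ∀ x, Pt (-1) (θ₁ x) = θ₂ x := by
    intro x
    apply hPinj
    have e1 : P (Pt (-1) (θ₁ x)) = θ₁ x := by
      rw [← Pt_one, Pt_comp]
      have h10 : (1 : ℝ) + -1 = 0 := by norm_num
      rw [h10, Pt_zero]
    have e2 : P (θ₂ x) = θ₁ x := by rw [hPapp, hθ₂]
    rw [e1, e2]
  -- package the powers as linear equivalences
  have hPtinv : ∀ t, (Pt t) ∘ₗ (Pt (-t)) = LinearMap.id := by
    intro t
    ext x
    simp only [LinearMap.coe_comp, Function.comp_apply, LinearMap.id_coe, id_eq]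
    rw [Pt_comp]
    have h0 : t + -t = 0 := by ring
    rw [h0, Pt_zero]
  set PtE : ℝ → (V ≃ₗ[ℝ] V) := fun t =>
    LinearEquiv.ofLinear (Pt t) (Pt (-t)) (hPtinv t) (by simpa using hPtinv (-t)) with hPtE
  have hPtEapp : ∀ t x, PtE t x = Pt t x := fun t x => rfl
  have hPtEsymm : ∀ t x, (PtE t).symm x = Pt (-t) x := fun t x => rfl
  letI := autTopology V
  have hmemS : ∀ t, PtE t ∈ isometrySubgroup (fun x y => b x y) := by
    intro t x y
    exact hO t x y
  set S := isometrySubgroup (fun x y => b x y) with hS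
  set γ : ℝ → S := fun t => ⟨PtE (-(t / 2)), hmemS _⟩ with hγ
  have expand : ∀ (s : ℝ) (v : V), Pt s v = ∑ k, (B.repr v k * μ k ^ s) • B k := by
    intro s v
    conv_lhs => rw [← B.sum_repr v, map_sum]
    simp only [map_smul, hPtB, smul_smul]
  have hentry : ∀ (v : V) (i : Fin (Module.finrank ℝ V)),
      Continuous fun t : ℝ => (Module.finBasis ℝ V).repr (Pt (-(t / 2)) v) i := by
    intro v i
    have hrw : ∀ t : ℝ, (Module.finBasis ℝ V).repr (Pt (-(t / 2)) v) i
        = ∑ k, (B.repr v k * μ k ^ (-(t / 2))) * (Module.finBasis ℝ V).repr (B k) i := by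
      intro t
      rw [expand, map_sum]
      simp only [map_smul, Finsupp.coe_finset_sum, Finset.sum_apply, Finsupp.coe_smul,
        Pi.smul_apply, smul_eq_mul]
    simp only [hrw]
    apply continuous_finset_sum
    intro k _
    have hck : Continuous fun t : ℝ => μ k ^ (-(t / 2)) := by
      have hexp : ∀ t : ℝ, μ k ^ (-(t / 2)) = Real.exp (Real.log (μ k) * (-(t / 2))) :=
        fun t => Real.rpow_def_of_pos (hμpos k) _
      simp only [hexp]
      exact Real.continuous_exp.comp (continuous_const.mul (continuous_id.div_const 2).neg)
    exact (continuous_const.mul hck).mul continuous_const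
  have hγcont : Continuous γ := by
    apply Continuous.subtype_mk
    apply continuous_induced_rng.2
    apply continuous_pi
    intro i
    apply continuous_pi
    intro j
    exact hentry (Module.finBasis ℝ V j) i
  have h1γ : γ 0 = 1 := by
    apply Subtype.ext
    apply DFunLike.ext
    intro x
    show Pt (-(0 / 2)) x = x
    have h0 : (-(0 / 2) : ℝ) = 0 := by norm_num
    rw [h0, Pt_zero]
  have hconn : γ 1 ∈ connectedComponent (1 : S) := by
    have himg : IsPreconnected (Set.range γ) := by
      rw [← Set.image_univ]
      exact isPreconnected_univ.image γ hγcont.continuousOn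
    exact himg.subset_connectedComponent (h1γ ▸ Set.mem_range_self 0) (Set.mem_range_self 1)
  refine ⟨PtE (-(1 / 2)), ⟨hmemS _, hconn⟩, ?_⟩
  · intro x
    rw [hPtEapp, hPtEsymm, neg_neg]
    have h2 := hcomm (-(1/2)) x
    rw [neg_neg] at h2
    rw [← h2, Pt_comp]
    have h3 : (-(1/2) : ℝ) + -(1/2) = -1 := by norm_num
    rw [h3]
    exact hfinal x

end Aux

/-- Any two Cartan involutions of a nondegenerate symmetric bilinear form
`b` on a finite-dimensional real vector space are conjugate by an element of the identity
component of the orthogonal group `O(b)`. -/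
theorem cartanInvolutions_conjugate_identityComponent {V : Type*} [AddCommGroup V]
    [Module ℝ V] [FiniteDimensional ℝ V] (b : LinearMap.BilinForm ℝ V)
    (hbsymm : ∀ x y : V, b x y = b y x) (hbnd : b.Nondegenerate)
    (θ₁ θ₂ : V →ₗ[ℝ] V) (h₁ : IsCartanInvolutionOfForm b θ₁)
    (h₂ : IsCartanInvolutionOfForm b θ₂) :
    ∃ A : V ≃ₗ[ℝ] V,
      MemIdentityComponent V (isometrySubgroup fun x y => b x y) A ∧
      ∀ x : V, A (θ₁ (A.symm x)) = θ₂ x := by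
  obtain ⟨hθ₁inv, hθ₁s, hθ₁pos⟩ := h₁
  obtain ⟨hθ₂inv, hθ₂s, hθ₂pos⟩ := h₂
  letI core : InnerProductSpace.Core ℝ V :=
  { inner := fun x y => b x (θ₁ y)
    conj_inner_symm := by
      intro x y
      simp only [starRingEnd_apply, star_trivial]
      rw [hbsymm y (θ₁ x), hθ₁s]
    re_inner_nonneg := by
      intro x
      rcases eq_or_ne x 0 with h | h
      · subst h; simp
      · exact le_of_lt (by simpa using hθ₁pos x h)
    add_left := by intro x y z; simp
    smul_left := by intro x y r; simp
    definite := by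
      intro x hx
      by_contra h
      exact absurd hx (ne_of_gt (hθ₁pos x h)) }
  letI : NormedAddCommGroup V := core.toNormedAddCommGroup
  letI : InnerProductSpace ℝ V := InnerProductSpace.ofCore core.toCore
  exact cartan_aux b θ₁ θ₂ hθ₁inv hθ₁s hθ₂inv hθ₂s hθ₂pos (fun x y => rfl)
end
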